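/- Let ψ, B : ℝ³ → ℝ be smooth (C^∞) functions of (t, x, y), 1-periodic in x and in y, let θ ∈ ℝ and let a, R ∈ ℝ with R ≠ 0. Set ω := −Δψ + (a/R) B. Suppose the Casimir-dissipative equations of 2D incompressible Hall MHD (enstrophy Casimir C = ½∫ω², L = Id) hold at every point: ∂_t(−Δψ) + {−Δψ, ψ} = − θ {{ψ, ω}, ψ} and ∂_t B + {B, ψ} = 0. Then for every t ∈ ℝ, the function t ↦ ½ ∫_{[0,1]²} ω(t, x, y)² dx dy is differentiable with derivative − θ ∫_{[0,1]²} {ψ, ω}(t, x, y)² dx dy. -/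

import Mathlib

open MeasureTheory

/-- Partial derivative in the time variable `t` of a function of `(t, x, y)`. -/
noncomputable def pdt (f : ℝ × ℝ × ℝ → ℝ) (p : ℝ × ℝ × ℝ) : ℝ :=
  deriv (fun s => f (s, p.2.1, p.2.2)) p.1

/-- Partial derivative in the first spatial variable `x`. -/
noncomputable def pdx (f : ℝ × ℝ × ℝ → ℝ) (p : ℝ × ℝ × ℝ) : ℝ :=
  deriv (fun s => f (p.1, s, p.2.2)) p.2.1

/-- Partial derivative in the second spatial variable `y`. -/
noncomputable def pdy (f : ℝ × ℝ × ℝ → ℝ) (p : ℝ × ℝ × ℝ) : ℝ :=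
  deriv (fun s => f (p.1, p.2.1, s)) p.2.2

/-- The canonical (Jacobian) bracket `{f, g} = ∂ₓf ∂_y g − ∂_y f ∂ₓ g` in the spatial
variables. -/
noncomputable def jacBracket (f g : ℝ × ℝ × ℝ → ℝ) (p : ℝ × ℝ × ℝ) : ℝ :=
  pdx f p * pdy g p - pdy f p * pdx g p

/-- The spatial Laplacian `Δ = ∂ₓ² + ∂_y²`. -/
noncomputable def spatialLap (f : ℝ × ℝ × ℝ → ℝ) (p : ℝ × ℝ × ℝ) : ℝ :=
  pdx (pdx f) p + pdy (pdy f) p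

section Toolkit

lemma slicet_hasDerivAt {f : ℝ × ℝ × ℝ → ℝ} (hf : ContDiff ℝ (⊤ : ℕ∞) f) (p : ℝ × ℝ × ℝ) :
    HasDerivAt (fun s => f (s, p.2.1, p.2.2)) (fderiv ℝ f p ((1:ℝ),(0:ℝ),(0:ℝ))) p.1 := by
  have h1 : HasDerivAt (fun s : ℝ => ((s, p.2.1, p.2.2) : ℝ × ℝ × ℝ)) ((1:ℝ),(0:ℝ),(0:ℝ)) p.1 :=
    (hasDerivAt_id p.1).prodMk ((hasDerivAt_const _ _).prodMk (hasDerivAt_const _ _))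
  have h2 : HasFDerivAt f (fderiv ℝ f p) ((p.1, p.2.1, p.2.2) : ℝ × ℝ × ℝ) := by
    simpa using ((hf.differentiable (by simp)) p).hasFDerivAt
  simpa [Function.comp_def] using h2.comp_hasDerivAt p.1 h1

lemma slicex_hasDerivAt {f : ℝ × ℝ × ℝ → ℝ} (hf : ContDiff ℝ (⊤ : ℕ∞) f) (p : ℝ × ℝ × ℝ) :
    HasDerivAt (fun s => f (p.1, s, p.2.2)) (fderiv ℝ f p ((0:ℝ),(1:ℝ),(0:ℝ))) p.2.1 := by
  have h1 : HasDerivAt (fun s : ℝ => ((p.1, s, p.2.2) : ℝ × ℝ × ℝ)) ((0:ℝ),(1:ℝ),(0:ℝ)) p.2.1 :=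
    (hasDerivAt_const _ _).prodMk ((hasDerivAt_id _).prodMk (hasDerivAt_const _ _))
  have h2 : HasFDerivAt f (fderiv ℝ f p) ((p.1, p.2.1, p.2.2) : ℝ × ℝ × ℝ) := by
    simpa using ((hf.differentiable (by simp)) p).hasFDerivAt
  simpa [Function.comp_def] using h2.comp_hasDerivAt p.2.1 h1

lemma slicey_hasDerivAt {f : ℝ × ℝ × ℝ → ℝ} (hf : ContDiff ℝ (⊤ : ℕ∞) f) (p : ℝ × ℝ × ℝ) :
    HasDerivAt (fun s => f (p.1, p.2.1, s)) (fderiv ℝ f p ((0:ℝ),(0:ℝ),(1:ℝ))) p.2.2 := by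
  have h1 : HasDerivAt (fun s : ℝ => ((p.1, p.2.1, s) : ℝ × ℝ × ℝ)) ((0:ℝ),(0:ℝ),(1:ℝ)) p.2.2 :=
    (hasDerivAt_const _ _).prodMk ((hasDerivAt_const _ _).prodMk (hasDerivAt_id _))
  have h2 : HasFDerivAt f (fderiv ℝ f p) ((p.1, p.2.1, p.2.2) : ℝ × ℝ × ℝ) := by
    simpa using ((hf.differentiable (by simp)) p).hasFDerivAt
  simpa [Function.comp_def] using h2.comp_hasDerivAt p.2.2 h1

lemma pdt_eq {f : ℝ × ℝ × ℝ → ℝ} (hf : ContDiff ℝ (⊤ : ℕ∞) f) (p : ℝ × ℝ × ℝ) :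
    pdt f p = fderiv ℝ f p ((1:ℝ),(0:ℝ),(0:ℝ)) := (slicet_hasDerivAt hf p).deriv

lemma pdx_eq {f : ℝ × ℝ × ℝ → ℝ} (hf : ContDiff ℝ (⊤ : ℕ∞) f) (p : ℝ × ℝ × ℝ) :
    pdx f p = fderiv ℝ f p ((0:ℝ),(1:ℝ),(0:ℝ)) := (slicex_hasDerivAt hf p).deriv

lemma pdy_eq {f : ℝ × ℝ × ℝ → ℝ} (hf : ContDiff ℝ (⊤ : ℕ∞) f) (p : ℝ × ℝ × ℝ) :
    pdy f p = fderiv ℝ f p ((0:ℝ),(0:ℝ),(1:ℝ)) := (slicey_hasDerivAt hf p).deriv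

lemma pdt_hasDerivAt {f : ℝ × ℝ × ℝ → ℝ} (hf : ContDiff ℝ (⊤ : ℕ∞) f) (p : ℝ × ℝ × ℝ) :
    HasDerivAt (fun s => f (s, p.2.1, p.2.2)) (pdt f p) p.1 := by
  rw [pdt_eq hf]; exact slicet_hasDerivAt hf p

lemma pdx_hasDerivAt {f : ℝ × ℝ × ℝ → ℝ} (hf : ContDiff ℝ (⊤ : ℕ∞) f) (p : ℝ × ℝ × ℝ) :
    HasDerivAt (fun s => f (p.1, s, p.2.2)) (pdx f p) p.2.1 := by
  rw [pdx_eq hf]; exact slicex_hasDerivAt hf p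

lemma pdy_hasDerivAt {f : ℝ × ℝ × ℝ → ℝ} (hf : ContDiff ℝ (⊤ : ℕ∞) f) (p : ℝ × ℝ × ℝ) :
    HasDerivAt (fun s => f (p.1, p.2.1, s)) (pdy f p) p.2.2 := by
  rw [pdy_eq hf]; exact slicey_hasDerivAt hf p

lemma smooth_pd {f : ℝ × ℝ × ℝ → ℝ} (hf : ContDiff ℝ (⊤ : ℕ∞) f) (v : ℝ × ℝ × ℝ) :
    ContDiff ℝ (⊤ : ℕ∞) (fun p => fderiv ℝ f p v) :=
  (ContinuousLinearMap.apply ℝ ℝ v).contDiff.comp (hf.fderiv_right (by exact_mod_cast le_top))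

lemma smooth_pdt {f : ℝ × ℝ × ℝ → ℝ} (hf : ContDiff ℝ (⊤ : ℕ∞) f) :
    ContDiff ℝ (⊤ : ℕ∞) (pdt f) := by
  have : pdt f = fun p => fderiv ℝ f p ((1:ℝ),(0:ℝ),(0:ℝ)) := funext fun p => pdt_eq hf p
  rw [this]; exact smooth_pd hf _

lemma smooth_pdx {f : ℝ × ℝ × ℝ → ℝ} (hf : ContDiff ℝ (⊤ : ℕ∞) f) :
    ContDiff ℝ (⊤ : ℕ∞) (pdx f) := by
  have : pdx f = fun p => fderiv ℝ f p ((0:ℝ),(1:ℝ),(0:ℝ)) := funext fun p => pdx_eq hf p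
  rw [this]; exact smooth_pd hf _

lemma smooth_pdy {f : ℝ × ℝ × ℝ → ℝ} (hf : ContDiff ℝ (⊤ : ℕ∞) f) :
    ContDiff ℝ (⊤ : ℕ∞) (pdy f) := by
  have : pdy f = fun p => fderiv ℝ f p ((0:ℝ),(0:ℝ),(1:ℝ)) := funext fun p => pdy_eq hf p
  rw [this]; exact smooth_pd hf _

lemma clairaut {f : ℝ × ℝ × ℝ → ℝ} (hf : ContDiff ℝ (⊤ : ℕ∞) f) (p : ℝ × ℝ × ℝ) :
    pdx (pdy f) p = pdy (pdx f) p := by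
  set A := fderiv ℝ (fderiv ℝ f) p with hA
  have hdf : ContDiff ℝ (⊤ : ℕ∞) (fun x => fderiv ℝ f x) :=
    hf.fderiv_right (by exact_mod_cast le_top)
  have hAp : HasFDerivAt (fderiv ℝ f) A p :=
    ((hdf.differentiable (by simp)) p).hasFDerivAt
  have hsymm : ∀ v w : ℝ × ℝ × ℝ, A v w = A w v := by
    intro v w
    exact second_derivative_symmetric
      (fun y => ((hf.differentiable (by simp)) y).hasFDerivAt) hAp v w
  have key : ∀ v w : ℝ × ℝ × ℝ, fderiv ℝ (fun q => fderiv ℝ f q v) p w = A w v := by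
    intro v w
    have h : HasFDerivAt (fun q => fderiv ℝ f q v)
        (((ContinuousLinearMap.apply ℝ ℝ v)).comp A) p :=
      ((ContinuousLinearMap.apply ℝ ℝ v).hasFDerivAt).comp p hAp
    rw [h.fderiv]
    rfl
  have h1 : pdy f = fun q => fderiv ℝ f q ((0:ℝ),(0:ℝ),(1:ℝ)) := funext fun q => pdy_eq hf q
  have h2 : pdx f = fun q => fderiv ℝ f q ((0:ℝ),(1:ℝ),(0:ℝ)) := funext fun q => pdx_eq hf q
  rw [pdx_eq (smooth_pdy hf) p, pdy_eq (smooth_pdx hf) p, h1, h2, key, key]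
  exact hsymm _ _

def PerX (f : ℝ × ℝ × ℝ → ℝ) : Prop := ∀ t x y : ℝ, f (t, x + 1, y) = f (t, x, y)
def PerY (f : ℝ × ℝ × ℝ → ℝ) : Prop := ∀ t x y : ℝ, f (t, x, y + 1) = f (t, x, y)

lemma perX_pdx {f : ℝ × ℝ × ℝ → ℝ} (hf : PerX f) : PerX (pdx f) := by
  intro t x y
  show deriv (fun s => f (t, s, y)) (x + 1) = deriv (fun s => f (t, s, y)) x
  rw [← deriv_comp_add_const (fun s => f (t, s, y)) 1 x]
  congr 1
  funext s
  exact hf t s y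

lemma perX_pdy {f : ℝ × ℝ × ℝ → ℝ} (hf : PerX f) : PerX (pdy f) := by
  intro t x y
  show deriv (fun s => f (t, x + 1, s)) y = deriv (fun s => f (t, x, s)) y
  congr 1
  funext s
  exact hf t x s

lemma perY_pdy {f : ℝ × ℝ × ℝ → ℝ} (hf : PerY f) : PerY (pdy f) := by
  intro t x y
  show deriv (fun s => f (t, x, s)) (y + 1) = deriv (fun s => f (t, x, s)) y
  rw [← deriv_comp_add_const (fun s => f (t, x, s)) 1 y]
  congr 1
  funext s
  exact hf t x s

lemma perY_pdx {f : ℝ × ℝ × ℝ → ℝ} (hf : PerY f) : PerY (pdx f) := by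
  intro t x y
  show deriv (fun s => f (t, s, y + 1)) x = deriv (fun s => f (t, s, y)) x
  congr 1
  funext s
  exact hf t s y

lemma integral_pdx_zero {f : ℝ × ℝ × ℝ → ℝ} (hf : ContDiff ℝ (⊤ : ℕ∞) f)
    (hfx : PerX f) (t : ℝ) :
    ∫ q in Set.Icc (0 : ℝ) 1 ×ˢ Set.Icc (0 : ℝ) 1, pdx f (t, q.1, q.2) = 0 := by
  have hc : Continuous (fun q : ℝ × ℝ => pdx f (t, q.1, q.2)) :=
    (smooth_pdx hf).continuous.comp (by continuity)
  have hint : IntegrableOn (fun q : ℝ × ℝ => pdx f (t, q.1, q.2))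
      (Set.Icc (0 : ℝ) 1 ×ˢ Set.Icc (0 : ℝ) 1) volume :=
    hc.continuousOn.integrableOn_compact (isCompact_Icc.prod isCompact_Icc)
  rw [Measure.volume_eq_prod] at hint ⊢
  have hint2 : Integrable (fun q : ℝ × ℝ => pdx f (t, q.1, q.2))
      ((volume.restrict (Set.Icc (0:ℝ) 1)).prod (volume.restrict (Set.Icc (0:ℝ) 1))) := by
    rw [Measure.prod_restrict]; exact hint
  rw [← Measure.prod_restrict]
  rw [integral_prod_symm _ hint2]
  have inner : ∀ y : ℝ, ∫ x in Set.Icc (0 : ℝ) 1, pdx f (t, x, y) = 0 := by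
    intro y
    rw [MeasureTheory.integral_Icc_eq_integral_Ioc,
      ← intervalIntegral.integral_of_le (zero_le_one)]
    have key : ∫ x in (0:ℝ)..1, pdx f (t, x, y) = f (t, 1, y) - f (t, 0, y) := by
      refine intervalIntegral.integral_eq_sub_of_hasDerivAt (f := fun x => f (t, x, y)) ?_ ?_
      · intro x _
        exact pdx_hasDerivAt hf (t, x, y)
      · exact ((smooth_pdx hf).continuous.comp (by continuity)).intervalIntegrable 0 1
    rw [key]
    have h0 := hfx t 0 y
    rw [zero_add] at h0
    rw [h0, sub_self]
  simp only [inner, integral_zero]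

lemma integral_pdy_zero {f : ℝ × ℝ × ℝ → ℝ} (hf : ContDiff ℝ (⊤ : ℕ∞) f)
    (hfy : PerY f) (t : ℝ) :
    ∫ q in Set.Icc (0 : ℝ) 1 ×ˢ Set.Icc (0 : ℝ) 1, pdy f (t, q.1, q.2) = 0 := by
  have hc : Continuous (fun q : ℝ × ℝ => pdy f (t, q.1, q.2)) :=
    (smooth_pdy hf).continuous.comp (by continuity)
  have hint : IntegrableOn (fun q : ℝ × ℝ => pdy f (t, q.1, q.2))
      (Set.Icc (0 : ℝ) 1 ×ˢ Set.Icc (0 : ℝ) 1) volume :=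
    hc.continuousOn.integrableOn_compact (isCompact_Icc.prod isCompact_Icc)
  rw [Measure.volume_eq_prod] at hint ⊢
  rw [setIntegral_prod _ hint]
  have inner : ∀ x : ℝ, ∫ y in Set.Icc (0 : ℝ) 1, pdy f (t, x, y) = 0 := by
    intro x
    rw [MeasureTheory.integral_Icc_eq_integral_Ioc,
      ← intervalIntegral.integral_of_le (zero_le_one)]
    have key : ∫ y in (0:ℝ)..1, pdy f (t, x, y) = f (t, x, 1) - f (t, x, 0) := by
      refine intervalIntegral.integral_eq_sub_of_hasDerivAt (f := fun y => f (t, x, y)) ?_ ?_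
      · intro y _
        exact pdy_hasDerivAt hf (t, x, y)
      · exact ((smooth_pdy hf).continuous.comp (by continuity)).intervalIntegrable 0 1
    rw [key]
    have h0 := hfy t x 0
    rw [zero_add] at h0
    rw [h0, sub_self]
  simp only [inner, integral_zero]

end Toolkit

section Key

variable {ψ B ω : ℝ × ℝ × ℝ → ℝ} {θ a R : ℝ}

lemma smooth_lap (hψ : ContDiff ℝ (⊤ : ℕ∞) ψ) :
    ContDiff ℝ (⊤ : ℕ∞) (fun q => -spatialLap ψ q) := by
  have h : (fun q => -spatialLap ψ q) = fun q => -(pdx (pdx ψ) q + pdy (pdy ψ) q) := rfl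
  rw [h]
  exact ((smooth_pdx (smooth_pdx hψ)).add (smooth_pdy (smooth_pdy hψ))).neg

lemma smooth_omega (hψ : ContDiff ℝ (⊤ : ℕ∞) ψ) (hB : ContDiff ℝ (⊤ : ℕ∞) B)
    (hω : ω = fun p => -spatialLap ψ p + (a / R) * B p) : ContDiff ℝ (⊤ : ℕ∞) ω := by
  rw [hω]; exact (smooth_lap hψ).add (contDiff_const.mul hB)

lemma smooth_jac {f g : ℝ × ℝ × ℝ → ℝ} (hf : ContDiff ℝ (⊤ : ℕ∞) f)
    (hg : ContDiff ℝ (⊤ : ℕ∞) g) : ContDiff ℝ (⊤ : ℕ∞) (jacBracket f g) := by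
  have h : jacBracket f g = fun p => pdx f p * pdy g p - pdy f p * pdx g p := rfl
  rw [h]
  exact ((smooth_pdx hf).mul (smooth_pdy hg)).sub ((smooth_pdy hf).mul (smooth_pdx hg))

lemma key_pointwise
    (hψ : ContDiff ℝ (⊤ : ℕ∞) ψ) (hB : ContDiff ℝ (⊤ : ℕ∞) B)
    (hω : ω = fun p => -spatialLap ψ p + (a / R) * B p)
    (heq1 : ∀ p : ℝ × ℝ × ℝ,
      pdt (fun q => -spatialLap ψ q) p + jacBracket (fun q => -spatialLap ψ q) ψ p =
        -(θ * jacBracket (jacBracket ψ ω) ψ p))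
    (heq2 : ∀ p : ℝ × ℝ × ℝ, pdt B p + jacBracket B ψ p = 0) (p : ℝ × ℝ × ℝ) :
    ω p * pdt ω p =
      pdx (fun q => -((2⁻¹ * (ω q * ω q) + θ * (ω q * jacBracket ψ ω q)) * pdy ψ q)) p
      + pdy (fun q => (2⁻¹ * (ω q * ω q) + θ * (ω q * jacBracket ψ ω q)) * pdx ψ q) p
      - θ * (jacBracket ψ ω p) ^ 2 := by
  have hLs : ContDiff ℝ (⊤ : ℕ∞) (fun q => -spatialLap ψ q) := smooth_lap hψ
  have hωs : ContDiff ℝ (⊤ : ℕ∞) ω := smooth_omega hψ hB hω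
  have hχs : ContDiff ℝ (⊤ : ℕ∞) (jacBracket ψ ω) := smooth_jac hψ hωs
  have hΦs : ContDiff ℝ (⊤ : ℕ∞)
      (fun q => 2⁻¹ * (ω q * ω q) + θ * (ω q * jacBracket ψ ω q)) :=
    (contDiff_const.mul (hωs.mul hωs)).add (contDiff_const.mul (hωs.mul hχs))
  -- time derivative of ω
  have hpdtω : pdt ω p = pdt (fun q => -spatialLap ψ q) p + (a / R) * pdt B p := by
    apply HasDerivAt.deriv
    rw [hω]
    exact (pdt_hasDerivAt hLs p).add ((pdt_hasDerivAt hB p).const_mul (a / R))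
  have hplx : pdx ω p = pdx (fun q => -spatialLap ψ q) p + (a / R) * pdx B p := by
    apply HasDerivAt.deriv
    rw [hω]
    exact (pdx_hasDerivAt hLs p).add ((pdx_hasDerivAt hB p).const_mul (a / R))
  have hply : pdy ω p = pdy (fun q => -spatialLap ψ q) p + (a / R) * pdy B p := by
    apply HasDerivAt.deriv
    rw [hω]
    exact (pdy_hasDerivAt hLs p).add ((pdy_hasDerivAt hB p).const_mul (a / R))
  -- expansion of the divergence terms
  have hGx : pdx (fun q => -((2⁻¹ * (ω q * ω q) + θ * (ω q * jacBracket ψ ω q)) * pdy ψ q)) p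
      = -(pdx (fun q => 2⁻¹ * (ω q * ω q) + θ * (ω q * jacBracket ψ ω q)) p * pdy ψ p
          + (2⁻¹ * (ω p * ω p) + θ * (ω p * jacBracket ψ ω p)) * pdx (pdy ψ) p) := by
    apply HasDerivAt.deriv
    exact ((pdx_hasDerivAt hΦs p).mul (pdx_hasDerivAt (smooth_pdy hψ) p)).neg
  have hHy : pdy (fun q => (2⁻¹ * (ω q * ω q) + θ * (ω q * jacBracket ψ ω q)) * pdx ψ q) p
      = pdy (fun q => 2⁻¹ * (ω q * ω q) + θ * (ω q * jacBracket ψ ω q)) p * pdx ψ p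
          + (2⁻¹ * (ω p * ω p) + θ * (ω p * jacBracket ψ ω p)) * pdy (pdx ψ) p := by
    apply HasDerivAt.deriv
    exact (pdy_hasDerivAt hΦs p).mul (pdy_hasDerivAt (smooth_pdx hψ) p)
  have hΦx : pdx (fun q => 2⁻¹ * (ω q * ω q) + θ * (ω q * jacBracket ψ ω q)) p
      = 2⁻¹ * (pdx ω p * ω p + ω p * pdx ω p)
        + θ * (pdx ω p * jacBracket ψ ω p + ω p * pdx (jacBracket ψ ω) p) := by
    apply HasDerivAt.deriv
    exact (((pdx_hasDerivAt hωs p).mul (pdx_hasDerivAt hωs p)).const_mul 2⁻¹).add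
      (((pdx_hasDerivAt hωs p).mul (pdx_hasDerivAt hχs p)).const_mul θ)
  have hΦy : pdy (fun q => 2⁻¹ * (ω q * ω q) + θ * (ω q * jacBracket ψ ω q)) p
      = 2⁻¹ * (pdy ω p * ω p + ω p * pdy ω p)
        + θ * (pdy ω p * jacBracket ψ ω p + ω p * pdy (jacBracket ψ ω) p) := by
    apply HasDerivAt.deriv
    exact (((pdy_hasDerivAt hωs p).mul (pdy_hasDerivAt hωs p)).const_mul 2⁻¹).add
      (((pdy_hasDerivAt hωs p).mul (pdy_hasDerivAt hχs p)).const_mul θ)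
  have hCl : pdx (pdy ψ) p = pdy (pdx ψ) p := clairaut hψ p
  have e1 := heq1 p
  have e2 := heq2 p
  rw [hpdtω, hGx, hHy, hΦx, hΦy, hCl]
  simp only [jacBracket] at e1 e2 ⊢
  rw [hplx, hply]
  linear_combination (ω p) * e1 + (a / R * ω p) * e2

end Key

section Main

variable {ψ B ω : ℝ × ℝ × ℝ → ℝ} {θ a R : ℝ}

lemma perX_jac {f g : ℝ × ℝ × ℝ → ℝ} (hf : PerX f) (hg : PerX g) : PerX (jacBracket f g) := by
  intro t x y
  show pdx f (t, x+1, y) * pdy g (t, x+1, y) - pdy f (t, x+1, y) * pdx g (t, x+1, y) = _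
  rw [perX_pdx hf t x y, perX_pdy hg t x y, perX_pdy hf t x y, perX_pdx hg t x y]
  rfl

lemma perY_jac {f g : ℝ × ℝ × ℝ → ℝ} (hf : PerY f) (hg : PerY g) : PerY (jacBracket f g) := by
  intro t x y
  show pdx f (t, x, y+1) * pdy g (t, x, y+1) - pdy f (t, x, y+1) * pdx g (t, x, y+1) = _
  rw [perY_pdx hf t x y, perY_pdy hg t x y, perY_pdy hf t x y, perY_pdx hg t x y]
  rfl

lemma perX_omega (hψx : PerX ψ) (hBx : PerX B)
    (hω : ω = fun p => -spatialLap ψ p + (a / R) * B p) : PerX ω := by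
  intro t x y
  rw [hω]
  show -spatialLap ψ (t, x+1, y) + a / R * B (t, x+1, y) = _
  have hS : spatialLap ψ (t, x+1, y) = spatialLap ψ (t, x, y) := by
    show pdx (pdx ψ) (t, x+1, y) + pdy (pdy ψ) (t, x+1, y) = _
    rw [perX_pdx (perX_pdx hψx) t x y, perX_pdy (perX_pdy hψx) t x y]
    rfl
  rw [hS, hBx t x y]

lemma perY_omega (hψy : PerY ψ) (hBy : PerY B)
    (hω : ω = fun p => -spatialLap ψ p + (a / R) * B p) : PerY ω := by
  intro t x y
  rw [hω]
  show -spatialLap ψ (t, x, y+1) + a / R * B (t, x, y+1) = _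
  have hS : spatialLap ψ (t, x, y+1) = spatialLap ψ (t, x, y) := by
    show pdx (pdx ψ) (t, x, y+1) + pdy (pdy ψ) (t, x, y+1) = _
    rw [perY_pdx (perY_pdx hψy) t x y, perY_pdy (perY_pdy hψy) t x y]
    rfl
  rw [hS, hBy t x y]

/-- For smooth, spatially `1`-periodic solutions of the Casimir-dissipative
equations of 2D incompressible Hall MHD with `𝐁 = B ẑ` normal to the plane, enstrophy
Casimir `½∫ω²` (L = Id), with ion charge-to-mass ratio `a`, Hall parameter `R ≠ 0`, and
`ω = −Δψ + (a/R)B`: `∂ₜ(−Δψ) + {−Δψ, ψ} = −θ{{ψ, ω}, ψ}`, `∂ₜB + {B, ψ} = 0`, the Casimir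
decays at the rate `d/dt (½∫ω²) = −θ ∫ {ψ, ω}²` (integrals over the unit square). -/
theorem statement19
    (ψ B : ℝ × ℝ × ℝ → ℝ) (θ a R : ℝ) (hR : R ≠ 0)
    (hψ : ContDiff ℝ (⊤ : ℕ∞) ψ) (hB : ContDiff ℝ (⊤ : ℕ∞) B)
    (hψx : ∀ t x y : ℝ, ψ (t, x + 1, y) = ψ (t, x, y))
    (hψy : ∀ t x y : ℝ, ψ (t, x, y + 1) = ψ (t, x, y))
    (hBx : ∀ t x y : ℝ, B (t, x + 1, y) = B (t, x, y))
    (hBy : ∀ t x y : ℝ, B (t, x, y + 1) = B (t, x, y))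
    (ω : ℝ × ℝ × ℝ → ℝ)
    (hω : ω = fun p => -spatialLap ψ p + (a / R) * B p)
    (heq1 : ∀ p : ℝ × ℝ × ℝ,
      pdt (fun q => -spatialLap ψ q) p + jacBracket (fun q => -spatialLap ψ q) ψ p =
        -(θ * jacBracket (jacBracket ψ ω) ψ p))
    (heq2 : ∀ p : ℝ × ℝ × ℝ, pdt B p + jacBracket B ψ p = 0) :
    ∀ t : ℝ,
      HasDerivAt
        (fun s => (1 / 2) *
          ∫ q in Set.Icc (0 : ℝ) 1 ×ˢ Set.Icc (0 : ℝ) 1, (ω (s, q.1, q.2)) ^ 2)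
        (-(θ * ∫ q in Set.Icc (0 : ℝ) 1 ×ˢ Set.Icc (0 : ℝ) 1,
            (jacBracket ψ ω (t, q.1, q.2)) ^ 2)) t := by
  intro t
  -- smoothness facts
  have hωs : ContDiff ℝ (⊤ : ℕ∞) ω := smooth_omega hψ hB hω
  have hχs : ContDiff ℝ (⊤ : ℕ∞) (jacBracket ψ ω) := smooth_jac hψ hωs
  have hΦs : ContDiff ℝ (⊤ : ℕ∞)
      (fun q => 2⁻¹ * (ω q * ω q) + θ * (ω q * jacBracket ψ ω q)) :=
    (contDiff_const.mul (hωs.mul hωs)).add (contDiff_const.mul (hωs.mul hχs))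
  have hGs : ContDiff ℝ (⊤ : ℕ∞)
      (fun q => -((2⁻¹ * (ω q * ω q) + θ * (ω q * jacBracket ψ ω q)) * pdy ψ q)) :=
    (hΦs.mul (smooth_pdy hψ)).neg
  have hHs : ContDiff ℝ (⊤ : ℕ∞)
      (fun q => (2⁻¹ * (ω q * ω q) + θ * (ω q * jacBracket ψ ω q)) * pdx ψ q) :=
    hΦs.mul (smooth_pdx hψ)
  -- periodicity facts
  have hψX : PerX ψ := hψx
  have hψY : PerY ψ := hψy
  have hωX : PerX ω := perX_omega hψX hBx hω
  have hωY : PerY ω := perY_omega hψY hBy hω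
  have hχX : PerX (jacBracket ψ ω) := perX_jac hψX hωX
  have hχY : PerY (jacBracket ψ ω) := perY_jac hψY hωY
  have hGX : PerX (fun q => -((2⁻¹ * (ω q * ω q) + θ * (ω q * jacBracket ψ ω q)) * pdy ψ q)) := by
    intro τ x y
    show -((2⁻¹ * (ω (τ,x+1,y) * ω (τ,x+1,y)) + θ * (ω (τ,x+1,y) * jacBracket ψ ω (τ,x+1,y)))
        * pdy ψ (τ,x+1,y)) = _
    rw [hωX τ x y, hχX τ x y, perX_pdy hψX τ x y]
  have hHY : PerY (fun q => (2⁻¹ * (ω q * ω q) + θ * (ω q * jacBracket ψ ω q)) * pdx ψ q) := by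
    intro τ x y
    show (2⁻¹ * (ω (τ,x,y+1) * ω (τ,x,y+1)) + θ * (ω (τ,x,y+1) * jacBracket ψ ω (τ,x,y+1)))
        * pdx ψ (τ,x,y+1) = _
    rw [hωY τ x y, hχY τ x y, perY_pdx hψY τ x y]
  -- continuity
  have hcω : Continuous ω := hωs.continuous
  have hcpdt : Continuous (pdt ω) := (smooth_pdt hωs).continuous
  have hre : Continuous (fun z : ℝ × (ℝ × ℝ) => ((z.1, z.2.1, z.2.2) : ℝ × ℝ × ℝ)) :=
    continuous_fst.prodMk (((continuous_fst.comp continuous_snd)).prodMk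
      ((continuous_snd.comp continuous_snd)))
  have hsl : ∀ s : ℝ, Continuous (fun q : ℝ × ℝ => ((s, q.1, q.2) : ℝ × ℝ × ℝ)) := fun s =>
    continuous_const.prodMk (continuous_fst.prodMk continuous_snd)
  have hScpt : IsCompact (Set.Icc (0 : ℝ) 1 ×ˢ Set.Icc (0 : ℝ) 1) :=
    isCompact_Icc.prod isCompact_Icc
  have hSmeas : MeasurableSet (Set.Icc (0 : ℝ) 1 ×ˢ Set.Icc (0 : ℝ) 1) :=
    measurableSet_Icc.prod measurableSet_Icc
  -- uniform bound for the time-derivative of the integrand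
  obtain ⟨C, hC⟩ :=
    ((isCompact_Icc (a := t - 1) (b := t + 1)).prod hScpt).exists_bound_of_continuousOn
      (f := fun z : ℝ × (ℝ × ℝ) =>
        2 * (ω (z.1, z.2.1, z.2.2) * pdt ω (z.1, z.2.1, z.2.2)))
      ((continuous_const.mul ((hcω.comp hre).mul (hcpdt.comp hre))).continuousOn)
  -- differentiation under the integral sign
  have main := (hasDerivAt_integral_of_dominated_loc_of_deriv_le
      (F := fun s (q : ℝ × ℝ) => ω (s, q.1, q.2) ^ 2)
      (F' := fun s (q : ℝ × ℝ) => 2 * (ω (s, q.1, q.2) * pdt ω (s, q.1, q.2)))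
      (μ := volume.restrict (Set.Icc (0 : ℝ) 1 ×ˢ Set.Icc (0 : ℝ) 1))
      (x₀ := t) (bound := fun _ => C) (Metric.ball_mem_nhds t one_pos)
      (Filter.Eventually.of_forall fun s =>
        (((hcω.comp (hsl s)).pow 2).aestronglyMeasurable))
      (((hcω.comp (hsl t)).pow 2).continuousOn.integrableOn_compact hScpt)
      ((continuous_const.mul ((hcω.comp (hsl t)).mul (hcpdt.comp (hsl t)))).aestronglyMeasurable)
      ((ae_restrict_iff' hSmeas).mpr (Filter.Eventually.of_forall fun q hq s hs => by
        have hsI : s ∈ Set.Icc (t - 1) (t + 1) := by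
          have := Metric.mem_ball.mp hs
          rw [Real.dist_eq] at this
          have h1 := abs_lt.mp this
          constructor <;> linarith
        exact hC (s, q) ⟨hsI, hq⟩))
      ((integrableOn_const hScpt.measure_lt_top.ne))
      (Filter.Eventually.of_forall fun q s hs => by
        have h := (pdt_hasDerivAt hωs (s, q.1, q.2)).fun_pow 2
        refine h.congr_deriv ?_
        dsimp only
        push_cast
        ring)).2
  -- identify the value of the derivative
  have hint1 : IntegrableOn (fun q : ℝ × ℝ =>
      pdx (fun q => -((2⁻¹ * (ω q * ω q) + θ * (ω q * jacBracket ψ ω q)) * pdy ψ q)) (t, q.1, q.2)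
      + pdy (fun q => (2⁻¹ * (ω q * ω q) + θ * (ω q * jacBracket ψ ω q)) * pdx ψ q) (t, q.1, q.2))
      (Set.Icc (0 : ℝ) 1 ×ˢ Set.Icc (0 : ℝ) 1) volume :=
    ((((smooth_pdx hGs).continuous.comp (hsl t)).add
      ((smooth_pdy hHs).continuous.comp (hsl t))).continuousOn).integrableOn_compact hScpt
  have hint2 : IntegrableOn (fun q : ℝ × ℝ => θ * (jacBracket ψ ω (t, q.1, q.2)) ^ 2)
      (Set.Icc (0 : ℝ) 1 ×ˢ Set.Icc (0 : ℝ) 1) volume :=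
    ((continuous_const.mul ((hχs.continuous.comp (hsl t)).pow 2)).continuousOn).integrableOn_compact
      hScpt
  have hint3 : IntegrableOn (fun q : ℝ × ℝ =>
      pdx (fun q => -((2⁻¹ * (ω q * ω q) + θ * (ω q * jacBracket ψ ω q)) * pdy ψ q)) (t, q.1, q.2))
      (Set.Icc (0 : ℝ) 1 ×ˢ Set.Icc (0 : ℝ) 1) volume :=
    (((smooth_pdx hGs).continuous.comp (hsl t)).continuousOn).integrableOn_compact hScpt
  have hint4 : IntegrableOn (fun q : ℝ × ℝ =>
      pdy (fun q => (2⁻¹ * (ω q * ω q) + θ * (ω q * jacBracket ψ ω q)) * pdx ψ q) (t, q.1, q.2))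
      (Set.Icc (0 : ℝ) 1 ×ˢ Set.Icc (0 : ℝ) 1) volume :=
    (((smooth_pdy hHs).continuous.comp (hsl t)).continuousOn).integrableOn_compact hScpt
  have hval : (1 / 2 : ℝ) * ∫ q in Set.Icc (0 : ℝ) 1 ×ˢ Set.Icc (0 : ℝ) 1,
      2 * (ω (t, q.1, q.2) * pdt ω (t, q.1, q.2)) =
      -(θ * ∫ q in Set.Icc (0 : ℝ) 1 ×ˢ Set.Icc (0 : ℝ) 1,
        (jacBracket ψ ω (t, q.1, q.2)) ^ 2) := by
    rw [integral_const_mul]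
    have hrw : (fun q : ℝ × ℝ => ω (t, q.1, q.2) * pdt ω (t, q.1, q.2)) =
        fun q : ℝ × ℝ =>
          (pdx (fun q => -((2⁻¹ * (ω q * ω q) + θ * (ω q * jacBracket ψ ω q)) * pdy ψ q))
              (t, q.1, q.2)
            + pdy (fun q => (2⁻¹ * (ω q * ω q) + θ * (ω q * jacBracket ψ ω q)) * pdx ψ q)
              (t, q.1, q.2))
          - θ * (jacBracket ψ ω (t, q.1, q.2)) ^ 2 := by
      funext q
      have h := key_pointwise hψ hB hω heq1 heq2 (t, q.1, q.2)
      linarith [h]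
    rw [hrw, integral_sub hint1 hint2, integral_add hint3 hint4,
      integral_pdx_zero hGs hGX t, integral_pdy_zero hHs hHY t, integral_const_mul]
    ring
  have final := main.const_mul (1 / 2 : ℝ)
  rw [hval] at final
  exact final

end Main
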